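/- If (a_n) and (b_n) are sequences of positive real numbers such that lim_{n→∞} n(a_n/a_{n+1} − 1) = p and lim_{n→∞} n(b_n/b_{n+1} − 1) = q with p < q, then the limit lim_{n→∞} n((a_n + b_n)/(a_{n+1} + b_{n+1}) − 1) exists and equals p. -/

import Mathlib

open Filter

/-- A positive sequence with positive Raabe limit tends to zero. -/
lemma raabe_tendsto_zero (c : ℕ → ℝ) (hc : ∀ n, 0 < c n) {r : ℝ}
    (h : Tendsto (fun n : ℕ => (n : ℝ) * (c n / c (n + 1) - 1)) atTop (nhds r))
    (hr : 0 < r) : Tendsto c atTop (nhds 0) := by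
  set s : ℝ := min (r / 2) (1 / 2) with hs
  have hs0 : 0 < s := lt_min (by linarith) (by norm_num)
  have hs1 : s ≤ 1 := le_trans (min_le_right _ _) (by norm_num)
  have hsr : s < r := lt_of_le_of_lt (min_le_left _ _) (by linarith)
  have hev : ∀ᶠ n : ℕ in atTop, s ≤ (n : ℝ) * (c n / c (n + 1) - 1) :=
    h.eventually (eventually_ge_nhds hsr)
  obtain ⟨N0, hN0⟩ := eventually_atTop.1 hev
  set N := max N0 1 with hN
  -- key step: c (n+1) * (n+1)^s ≤ c n * n^s for n ≥ N
  have key : ∀ n : ℕ, N ≤ n → c (n + 1) * ((n : ℝ) + 1) ^ s ≤ c n * (n : ℝ) ^ s := by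
    intro n hn
    have hn1 : 1 ≤ n := le_trans (le_max_right _ _) hn
    have hnpos : (0 : ℝ) < n := by exact_mod_cast hn1
    have h1 : s ≤ (n : ℝ) * (c n / c (n + 1) - 1) := hN0 n (le_trans (le_max_left _ _) hn)
    have h2 : 1 + s / n ≤ c n / c (n + 1) := by
      have hx : s / n ≤ c n / c (n + 1) - 1 := by
        rw [div_le_iff₀ hnpos]
        nlinarith [h1]
      linarith
    have h3 : c (n + 1) * (1 + s / n) ≤ c n := by
      have := (le_div_iff₀ (hc (n + 1))).mp h2
      nlinarith [this]
    -- (n+1)^s ≤ n^s * (1 + s/n)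
    have h4 : ((n : ℝ) + 1) ^ s ≤ (n : ℝ) ^ s * (1 + s / n) := by
      have hb : (1 + 1 / (n : ℝ)) ^ s ≤ 1 + s * (1 / n) :=
        rpow_one_add_le_one_add_mul_self
          (le_trans (by norm_num) (by positivity : (0:ℝ) ≤ 1 / (n:ℝ))) hs0.le hs1
      have heq : ((n : ℝ) + 1) = (n : ℝ) * (1 + 1 / n) := by field_simp
      rw [heq, Real.mul_rpow hnpos.le (by positivity)]
      calc (n : ℝ) ^ s * (1 + 1 / n) ^ s ≤ (n : ℝ) ^ s * (1 + s * (1 / n)) := by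
            exact mul_le_mul_of_nonneg_left hb (by positivity)
        _ = (n : ℝ) ^ s * (1 + s / n) := by ring
    calc c (n + 1) * ((n : ℝ) + 1) ^ s ≤ c (n + 1) * ((n : ℝ) ^ s * (1 + s / n)) :=
          mul_le_mul_of_nonneg_left h4 (hc _).le
      _ = c (n + 1) * (1 + s / n) * (n : ℝ) ^ s := by ring
      _ ≤ c n * (n : ℝ) ^ s := mul_le_mul_of_nonneg_right h3 (by positivity)
  -- so c n * n^s ≤ C for n ≥ N
  set C : ℝ := c N * (N : ℝ) ^ s with hC
  have bound : ∀ n : ℕ, N ≤ n → c n * (n : ℝ) ^ s ≤ C := by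
    intro n hn
    induction n with
    | zero => simp_all
    | succ m ih =>
      rcases Nat.lt_or_ge N (m + 1) with hlt | hge
      · have hm : N ≤ m := Nat.lt_succ_iff.mp hlt
        exact le_trans (by exact_mod_cast key m hm) (ih hm)
      · have : N = m + 1 := le_antisymm hn hge
        simp [this, hC]
  have hbound' : ∀ᶠ n : ℕ in atTop, c n ≤ C * (n : ℝ) ^ (-s) := by
    filter_upwards [eventually_ge_atTop (max N 1)] with n hn
    have hn1 : 1 ≤ n := le_trans (le_max_right _ _) hn
    have hnpos : (0 : ℝ) < n := by exact_mod_cast hn1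
    have hb := bound n (le_trans (le_max_left _ _) hn)
    rw [Real.rpow_neg hnpos.le, ← div_eq_mul_inv,
      le_div_iff₀ (Real.rpow_pos_of_pos hnpos s)]
    exact hb
  have hgz : Tendsto (fun n : ℕ => C * (n : ℝ) ^ (-s)) atTop (nhds 0) := by
    have : Tendsto (fun n : ℕ => (n : ℝ) ^ (-s)) atTop (nhds 0) :=
      (tendsto_rpow_neg_atTop hs0).comp tendsto_natCast_atTop_atTop
    simpa using this.const_mul C
  exact squeeze_zero' (Eventually.of_forall fun n => (hc n).le) hbound' hgz

/-- If `(aₙ)` and `(bₙ)` are positive sequences with Raabe limits `p < q`, then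
`(aₙ + bₙ)` has Raabe limit `p`. -/
theorem raabe_value_add (a b : ℕ → ℝ) (ha : ∀ n, 0 < a n) (hb : ∀ n, 0 < b n)
    (p q : ℝ)
    (hp : Tendsto (fun n : ℕ => (n : ℝ) * (a n / a (n + 1) - 1)) atTop (nhds p))
    (hq : Tendsto (fun n : ℕ => (n : ℝ) * (b n / b (n + 1) - 1)) atTop (nhds q))
    (hpq : p < q) :
    Tendsto (fun n : ℕ => (n : ℝ) * ((a n + b n) / (a (n + 1) + b (n + 1)) - 1))
      atTop (nhds p) := by
  -- a n / a (n+1) → 1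
  have hratio : Tendsto (fun n : ℕ => a n / a (n + 1)) atTop (nhds 1) := by
    have h0 : Tendsto (fun n : ℕ => (1 / (n : ℝ)) * ((n : ℝ) * (a n / a (n + 1) - 1)))
        atTop (nhds (0 * p)) := tendsto_one_div_atTop_nhds_zero_nat.mul hp
    have h1 : Tendsto (fun n : ℕ => a n / a (n + 1) - 1) atTop (nhds 0) := by
      apply Tendsto.congr' _ (by simpa using h0)
      filter_upwards [eventually_ge_atTop 1] with n hn
      have : (n : ℝ) ≠ 0 := by positivity
      field_simp
    have := h1.add (tendsto_const_nhds (x := (1:ℝ)))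
    simpa using this
  have hratio' : Tendsto (fun n : ℕ => a (n + 1) / a n) atTop (nhds 1) := by
    have := (hratio.inv₀ one_ne_zero)
    simpa [inv_div] using this
  set c : ℕ → ℝ := fun n => b n / a n with hcdef
  have hcpos : ∀ n, 0 < c n := fun n => div_pos (hb n) (ha n)
  have hcraabe : Tendsto (fun n : ℕ => (n : ℝ) * (c n / c (n + 1) - 1)) atTop (nhds (q - p)) := by
    have hEq : ∀ n : ℕ, (n : ℝ) * (c n / c (n + 1) - 1) =
        (a (n + 1) / a n) * ((n : ℝ) * (b n / b (n + 1) - 1) - (n : ℝ) * (a n / a (n + 1) - 1)) := by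
      intro n
      have h1 := (ha n).ne'
      have h2 := (ha (n + 1)).ne'
      have h3 := (hb n).ne'
      have h4 := (hb (n + 1)).ne'
      simp only [hcdef]
      field_simp
      ring
    have := hratio'.mul (hq.sub hp)
    rw [one_mul] at this
    exact Tendsto.congr (fun n => (hEq n).symm) this
  have hczero : Tendsto c atTop (nhds 0) := raabe_tendsto_zero c hcpos hcraabe (by linarith)
  have hcs : Tendsto (fun n : ℕ => c (n + 1)) atTop (nhds 0) :=
    hczero.comp (tendsto_add_atTop_nat 1)
  have hden : Tendsto (fun n : ℕ => 1 + c (n + 1)) atTop (nhds 1) := by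
    simpa using (tendsto_const_nhds (x := (1:ℝ))).add hcs
  have T1 : Tendsto (fun n : ℕ => 1 / (1 + c (n + 1))) atTop (nhds 1) := by
    simpa [one_div] using hden.inv₀ one_ne_zero
  have T2 : Tendsto (fun n : ℕ => c (n + 1) / (1 + c (n + 1))) atTop (nhds 0) := by
    have := hcs.div hden one_ne_zero
    rwa [zero_div] at this
  have final := (hp.mul T1).add (hq.mul T2)
  rw [mul_one, mul_zero, add_zero] at final
  apply Tendsto.congr _ final
  intro n
  have h2 := (ha (n + 1)).ne'
  have h4 := (hb (n + 1)).ne'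
  have h5 : a (n + 1) + b (n + 1) ≠ 0 :=
    ne_of_gt (by have := ha (n + 1); have := hb (n + 1); linarith)
  simp only [hcdef]
  field_simp
  ring
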